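/- In the preferential attachment process (G_1^t), for all integers a, t with 1 ≤ a ≤ t, the expected value of Σ_{j=1}^{a} deg(v_j, t) (the sum of the degrees in G_1^t of the first a vertices, loops counting twice) equals 2a · ∏_{i=a+1}^{t} (2i)/(2i−1) = 2a · Γ(t+1)Γ(a+1/2) / ( Γ(t+1/2)Γ(a+1) ). -/

import Mathlib

open Finset

noncomputable section

/-- Sample space for the preferential attachment process `G_1^N` (0-indexed vertices):
at step `t` the new vertex `t` sends its single edge to the vertex `σ t ≤ t`
(a loop when `σ t = t`). -/
abbrev PASpace (N : ℕ) : Type := ∀ t : Fin N, Fin (t.1 + 1)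

/-- The degree of vertex `s` in `G_1^t` (the graph after `t` steps), loops counted
twice: one for its own out-edge (if `s < t`) plus the number of in-edges received. -/
def paDeg {N : ℕ} (σ : PASpace N) (s t : ℕ) : ℕ :=
  (if s < t then 1 else 0) +
    (Finset.univ.filter (fun j : Fin N => j.1 < t ∧ (σ j : ℕ) = s)).card

/-- The probability of the outcome `σ` of the preferential attachment process: at step
`t`, vertex `σ t = s < t` is chosen with probability `deg(s, t)/(2t+1)` and `σ t = t`
(a loop) with probability `1/(2t+1)` (0-indexed steps). -/
noncomputable def paWeight {N : ℕ} (σ : PASpace N) : ℝ :=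
  ∏ t : Fin N,
    ((paDeg σ (σ t : ℕ) t.1 : ℝ) + (if (σ t : ℕ) = t.1 then 1 else 0)) /
      (2 * (t.1 : ℝ) + 1)

open scoped Classical in
/-- The probability of the event `E` for the preferential attachment process `G_1^N`. -/
noncomputable def paProb (N : ℕ) (E : PASpace N → Prop) : ℝ :=
  ∑ σ : PASpace N, if E σ then paWeight σ else 0

/-- The degree of vertex `j` of the multigraph `G_m^s` (obtained from `G_1^{ms}` by
identifying consecutive blocks of `m` vertices), loops counted twice; the ambient
process runs for `m·n ≥ m·s` steps. -/
def paDegM (m n : ℕ) (σ : PASpace (m * n)) (j s : ℕ) : ℕ :=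
  (Finset.univ.filter (fun t : Fin (m * n) => t.1 < m * s ∧ t.1 / m = j)).card +
    (Finset.univ.filter (fun t : Fin (m * n) => t.1 < m * s ∧ (σ t : ℕ) / m = j)).card

/-- The number of edges (with multiplicity, loops included) of `G_m^n` with both
endpoints in `A`. -/
def paEdgesIn (m n : ℕ) (σ : PASpace (m * n)) (A : Finset ℕ) : ℕ :=
  (Finset.univ.filter
    (fun t : Fin (m * n) => t.1 / m ∈ A ∧ (σ t : ℕ) / m ∈ A)).card

/-- The modularity `q_𝒜(G_m^n)` of a partition `𝒜` of the vertex set `{0, …, n−1}` of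
the multigraph `G_m^n`, which has exactly `m·n` edges. -/
noncomputable def paQ (m n : ℕ) (σ : PASpace (m * n))
    (P : Finpartition (Finset.range n)) : ℝ :=
  ∑ A ∈ P.parts,
    ((paEdgesIn m n σ A : ℝ) / (m * n) -
      (∑ j ∈ A, (paDegM m n σ j n : ℝ)) ^ 2 / (4 * ((m : ℝ) * n) ^ 2))

/-- The modularity `q*(G_m^n)`: the maximum of `q_𝒜` over all partitions `𝒜`. -/
noncomputable def paModularity (m n : ℕ) (σ : PASpace (m * n)) : ℝ :=
  sSup {q : ℝ | ∃ P : Finpartition (Finset.range n), q = paQ m n σ P}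


lemma paDeg_eq_sum {N} (σ : PASpace N) (s t : ℕ) :
    paDeg σ s t = (if s < t then 1 else 0)
      + ∑ j : Fin N, (if j.1 < t ∧ (σ j : ℕ) = s then 1 else 0) := by
  rw [paDeg, Finset.card_filter]


lemma deg_snoc_of_le {N} (σ : PASpace N) (x : Fin (N+1)) {s t : ℕ} (ht : t ≤ N) :
    paDeg (Fin.snoc σ x : PASpace (N+1)) s t = paDeg σ s t := by
  rw [paDeg_eq_sum, paDeg_eq_sum, Fin.sum_univ_castSucc]
  simp only [Fin.snoc_castSucc, Fin.snoc_last, Fin.coe_castSucc, Fin.val_last]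
  have h : ¬ (N < t ∧ (x : ℕ) = s) := by omega
  rw [if_neg h, add_zero]


lemma deg_snoc_top {N} (σ : PASpace N) (x : Fin (N+1)) {s : ℕ} (hs : s < N) :
    paDeg (Fin.snoc σ x : PASpace (N+1)) s (N+1)
      = paDeg σ s N + (if (x : ℕ) = s then 1 else 0) := by
  rw [paDeg_eq_sum, paDeg_eq_sum, Fin.sum_univ_castSucc]
  simp only [Fin.snoc_castSucc, Fin.snoc_last, Fin.coe_castSucc, Fin.val_last]
  have h1 : ∀ j : Fin N, ((j : ℕ) < N + 1 ∧ (σ j : ℕ) = s)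
      ↔ ((j : ℕ) < N ∧ (σ j : ℕ) = s) := fun j => by have := j.isLt; omega
  have h2 : (N < N + 1 ∧ (x : ℕ) = s) ↔ ((x : ℕ) = s) := by omega
  simp only [h1, h2]
  rw [if_pos (by omega), if_pos hs]
  omega


lemma deg_sum_all {N} (σ : PASpace N) : ∑ j ∈ Finset.range N, paDeg σ j N = 2 * N := by
  simp only [paDeg_eq_sum, Finset.sum_add_distrib]
  have h1 : ∑ j ∈ Finset.range N, (if j < N then 1 else 0) = N := by
    rw [Finset.sum_congr rfl (fun j hj => if_pos (Finset.mem_range.1 hj)),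
      Finset.sum_const, Finset.card_range, smul_eq_mul, mul_one]
  have h2 : ∑ j ∈ Finset.range N, ∑ j' : Fin N,
      (if (j' : ℕ) < N ∧ (σ j' : ℕ) = j then 1 else 0) = N := by
    rw [Finset.sum_comm]
    have : ∀ j' : Fin N, ∑ j ∈ Finset.range N,
        (if (j' : ℕ) < N ∧ (σ j' : ℕ) = j then 1 else 0) = 1 := by
      intro j'
      have : ∀ j : ℕ, ((j' : ℕ) < N ∧ (σ j' : ℕ) = j) ↔ ((σ j' : ℕ) = j) := by
        have := j'.isLt; omega
      simp only [this]
      rw [Finset.sum_ite_eq, if_pos]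
      exact Finset.mem_range.2 (lt_of_lt_of_le (σ j').isLt j'.isLt)
    rw [Finset.sum_congr rfl (fun j' _ => this j'), Finset.sum_const]
    simp
  omega


lemma deg_sum_fin {N} (σ : PASpace N) :
    ∑ x : Fin (N+1), (paDeg σ (x : ℕ) N + (if (x : ℕ) = N then 1 else 0)) = 2 * N + 1 := by
  rw [Finset.sum_add_distrib]
  have h2 : ∑ x : Fin (N+1), (if (x : ℕ) = N then 1 else 0) = 1 := by
    rw [Fin.sum_univ_eq_sum_range (fun x => if x = N then 1 else 0),
      Finset.sum_ite_eq', if_pos (Finset.mem_range.2 (by omega))]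
  have h1 : ∑ x : Fin (N+1), paDeg σ (x : ℕ) N = 2 * N := by
    rw [Fin.sum_univ_eq_sum_range (fun x => paDeg σ x N), Finset.range_add_one,
      Finset.sum_insert Finset.notMem_range_self, deg_sum_all]
    have : paDeg σ N N = 0 := by
      rw [paDeg_eq_sum, if_neg (lt_irrefl N)]
      rw [Finset.sum_eq_zero (fun j _ => by
        rw [if_neg]; have h := (σ j).isLt; have := j.isLt; omega)]
      rfl
    omega
  omega


lemma deg_sum_restricted {N a : ℕ} (σ : PASpace N) (ha : a ≤ N) :
    ∑ x : Fin (N+1), (paDeg σ (x : ℕ) N + (if (x : ℕ) = N then 1 else 0))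
        * (if (x : ℕ) < a then 1 else 0)
      = ∑ j ∈ Finset.range a, paDeg σ j N := by
  rw [Fin.sum_univ_eq_sum_range
    (fun x => (paDeg σ x N + (if x = N then 1 else 0)) * (if x < a then 1 else 0))]
  have h1 : ∀ x ∈ Finset.range (N+1),
      (paDeg σ x N + (if x = N then 1 else 0)) * (if x < a then 1 else 0)
        = if x < a then paDeg σ x N else 0 := by
    intro x _
    by_cases hx : x < a
    · rw [if_pos hx, if_pos hx, if_neg (by omega), mul_one, add_zero]
    · rw [if_neg hx, if_neg hx, mul_zero]
  rw [Finset.sum_congr rfl h1, ← Finset.sum_filter]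
  congr 1
  ext x
  simp only [Finset.mem_filter, Finset.mem_range]
  omega



lemma weight_snoc {N : ℕ} (σ : PASpace N) (x : Fin (N+1)) :
    paWeight (Fin.snoc σ x : PASpace (N+1)) = paWeight σ *
      (((paDeg σ (x : ℕ) N : ℝ) + (if (x : ℕ) = N then 1 else 0)) / (2 * (N : ℝ) + 1)) := by
  rw [paWeight, paWeight, Fin.prod_univ_castSucc]
  simp only [Fin.snoc_castSucc, Fin.snoc_last, Fin.coe_castSucc, Fin.val_last]
  congr 1
  · exact Finset.prod_congr rfl (fun t _ => by rw [deg_snoc_of_le σ x (le_of_lt t.isLt)])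
  · rw [deg_snoc_of_le σ x (le_refl N)]


lemma sum_snoc {M : Type*} [AddCommMonoid M] (N : ℕ) (f : PASpace (N+1) → M) :
    ∑ σ' : PASpace (N+1), f σ' = ∑ x : Fin (N+1), ∑ σ : PASpace N, f (Fin.snoc σ x) := by
  rw [← Equiv.sum_comp (Fin.snocEquiv (fun t : Fin (N+1) => Fin (t.1+1))) f,
    Fintype.sum_prod_type]
  rfl


lemma w_sum_one {N : ℕ} (σ : PASpace N) :
    ∑ x : Fin (N+1),
      ((paDeg σ (x : ℕ) N : ℝ) + (if (x : ℕ) = N then 1 else 0)) / (2 * (N : ℝ) + 1) = 1 := by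
  rw [← Finset.sum_div]
  have h : (∑ x : Fin (N+1), ((paDeg σ (x : ℕ) N : ℝ) + (if (x : ℕ) = N then 1 else 0)))
      = 2 * (N : ℝ) + 1 := by
    have := deg_sum_fin σ
    calc ∑ x : Fin (N+1), ((paDeg σ (x : ℕ) N : ℝ) + (if (x : ℕ) = N then 1 else 0))
        = ((∑ x : Fin (N+1), (paDeg σ (x : ℕ) N + (if (x : ℕ) = N then 1 else 0)) : ℕ) : ℝ) := by
          push_cast; rfl
      _ = 2 * (N : ℝ) + 1 := by rw [this]; push_cast; ring
  rw [h]
  field_simp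


lemma w_sum_ind {N a : ℕ} (σ : PASpace N) (ha : a ≤ N) :
    ∑ x : Fin (N+1),
      ((paDeg σ (x : ℕ) N : ℝ) + (if (x : ℕ) = N then 1 else 0)) / (2 * (N : ℝ) + 1)
        * (if (x : ℕ) < a then 1 else 0)
      = (∑ j ∈ Finset.range a, (paDeg σ j N : ℝ)) / (2 * (N : ℝ) + 1) := by
  have h : ∑ x : Fin (N+1),
      ((paDeg σ (x : ℕ) N : ℝ) + (if (x : ℕ) = N then 1 else 0))
        * (if (x : ℕ) < a then 1 else 0)
      = ∑ j ∈ Finset.range a, (paDeg σ j N : ℝ) := by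
    calc ∑ x : Fin (N+1),
        ((paDeg σ (x : ℕ) N : ℝ) + (if (x : ℕ) = N then 1 else 0))
          * (if (x : ℕ) < a then 1 else 0)
        = ((∑ x : Fin (N+1), (paDeg σ (x : ℕ) N + (if (x : ℕ) = N then 1 else 0))
            * (if (x : ℕ) < a then 1 else 0) : ℕ) : ℝ) := by push_cast; rfl
      _ = _ := by rw [deg_sum_restricted σ ha]; push_cast; rfl
  calc ∑ x : Fin (N+1),
      ((paDeg σ (x : ℕ) N : ℝ) + (if (x : ℕ) = N then 1 else 0)) / (2 * (N : ℝ) + 1)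
        * (if (x : ℕ) < a then 1 else 0)
      = (∑ x : Fin (N+1),
          ((paDeg σ (x : ℕ) N : ℝ) + (if (x : ℕ) = N then 1 else 0))
            * (if (x : ℕ) < a then 1 else 0)) / (2 * (N : ℝ) + 1) := by
        rw [Finset.sum_div]
        exact Finset.sum_congr rfl (fun x _ => by ring)
    _ = _ := by rw [h]


lemma weight_sum_one : ∀ N : ℕ, ∑ σ : PASpace N, paWeight σ = 1 := by
  intro N
  induction N with
  | zero =>
    have h : ∀ σ : PASpace 0, paWeight σ = 1 := fun σ => by
      rw [paWeight]; exact Finset.prod_empty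
    rw [Finset.sum_congr rfl (fun σ _ => h σ), Finset.sum_const, Finset.card_univ]
    simp
  | succ N ih =>
    rw [sum_snoc N paWeight, Finset.sum_comm]
    have h : ∀ σ : PASpace N, ∑ x : Fin (N+1), paWeight (Fin.snoc σ x : PASpace (N+1))
        = paWeight σ := by
      intro σ
      rw [Finset.sum_congr rfl (fun x _ => weight_snoc σ x), ← Finset.mul_sum,
        w_sum_one σ, mul_one]
    rw [Finset.sum_congr rfl (fun σ _ => h σ), ih]


lemma key (a : ℕ) : ∀ N : ℕ, a ≤ N →
    (∑ σ : PASpace N, paWeight σ * (∑ j ∈ Finset.range a, (paDeg σ j N : ℝ)))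
      = 2 * (a : ℝ) * ∏ i ∈ Finset.Icc (a + 1) N, (2 * (i : ℝ)) / (2 * (i : ℝ) - 1) := by
  refine Nat.le_induction ?_ ?_
  · rw [Finset.Icc_eq_empty (by omega), Finset.prod_empty, mul_one]
    have hσ : ∀ σ : PASpace a, (∑ j ∈ Finset.range a, (paDeg σ j a : ℝ)) = 2 * (a : ℝ) := by
      intro σ
      have := deg_sum_all σ
      calc ∑ j ∈ Finset.range a, (paDeg σ j a : ℝ)
          = ((∑ j ∈ Finset.range a, paDeg σ j a : ℕ) : ℝ) := by push_cast; rfl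
        _ = 2 * (a : ℝ) := by rw [this]; push_cast; ring
    rw [Finset.sum_congr rfl (fun σ _ => by rw [hσ σ]), ← Finset.sum_mul,
      weight_sum_one, one_mul]
  · intro N hN ih
    rw [sum_snoc N (fun σ' => paWeight σ' * (∑ j ∈ Finset.range a, (paDeg σ' j (N+1) : ℝ))),
      Finset.sum_comm]
    have hterm : ∀ σ : PASpace N,
        ∑ x : Fin (N+1), paWeight (Fin.snoc σ x : PASpace (N+1))
            * (∑ j ∈ Finset.range a, (paDeg (Fin.snoc σ x : PASpace (N+1)) j (N+1) : ℝ))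
        = ((2 * (N : ℝ) + 2) / (2 * (N : ℝ) + 1)) *
            (paWeight σ * (∑ j ∈ Finset.range a, (paDeg σ j N : ℝ))) := by
      intro σ
      have hS : ∀ x : Fin (N+1),
          (∑ j ∈ Finset.range a, (paDeg (Fin.snoc σ x : PASpace (N+1)) j (N+1) : ℝ))
          = (∑ j ∈ Finset.range a, (paDeg σ j N : ℝ)) + (if (x : ℕ) < a then 1 else 0) := by
        intro x
        have h1 : ∀ j ∈ Finset.range a,
            (paDeg (Fin.snoc σ x : PASpace (N+1)) j (N+1) : ℝ)
            = (paDeg σ j N : ℝ) + (if (x : ℕ) = j then 1 else 0) := by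
          intro j hj
          rw [deg_snoc_top σ x (lt_of_lt_of_le (Finset.mem_range.1 hj) hN)]
          push_cast
          rfl
        rw [Finset.sum_congr rfl h1, Finset.sum_add_distrib, Finset.sum_ite_eq]
        congr 1
        simp [Finset.mem_range]
      set S := ∑ j ∈ Finset.range a, (paDeg σ j N : ℝ) with hSdef
      calc ∑ x : Fin (N+1), paWeight (Fin.snoc σ x : PASpace (N+1))
              * (∑ j ∈ Finset.range a, (paDeg (Fin.snoc σ x : PASpace (N+1)) j (N+1) : ℝ))
          = ∑ x : Fin (N+1), paWeight σ *
              ((((paDeg σ (x : ℕ) N : ℝ) + (if (x : ℕ) = N then 1 else 0)) / (2 * (N : ℝ) + 1)) * S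
              + (((paDeg σ (x : ℕ) N : ℝ) + (if (x : ℕ) = N then 1 else 0)) / (2 * (N : ℝ) + 1))
                  * (if (x : ℕ) < a then 1 else 0)) := by
            refine Finset.sum_congr rfl (fun x _ => ?_)
            rw [weight_snoc σ x, hS x]
            ring
        _ = paWeight σ * ((∑ x : Fin (N+1),
              (((paDeg σ (x : ℕ) N : ℝ) + (if (x : ℕ) = N then 1 else 0)) / (2 * (N : ℝ) + 1))) * S
            + ∑ x : Fin (N+1),
              (((paDeg σ (x : ℕ) N : ℝ) + (if (x : ℕ) = N then 1 else 0)) / (2 * (N : ℝ) + 1))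
                  * (if (x : ℕ) < a then 1 else 0)) := by
            rw [← Finset.mul_sum, Finset.sum_add_distrib, Finset.sum_mul]
        _ = paWeight σ * (S + S / (2 * (N : ℝ) + 1)) := by
            rw [w_sum_one σ, w_sum_ind σ hN, one_mul]
        _ = ((2 * (N : ℝ) + 2) / (2 * (N : ℝ) + 1)) * (paWeight σ * S) := by
            have : (2 * (N : ℝ) + 1) ≠ 0 := by positivity
            field_simp
            ring
    rw [Finset.sum_congr rfl (fun σ _ => hterm σ), ← Finset.mul_sum, ih,
      Finset.prod_Icc_succ_top (by omega : a + 1 ≤ N + 1)]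
    have : (2 * (N : ℝ) + 1) ≠ 0 := by positivity
    push_cast
    field_simp
    ring_nf
    field_simp
    ring


lemma gamma_prod (a : ℕ) : ∀ t : ℕ, a ≤ t →
    ∏ i ∈ Finset.Icc (a + 1) t, (2 * (i : ℝ)) / (2 * (i : ℝ) - 1)
      = Real.Gamma ((t : ℝ) + 1) * Real.Gamma ((a : ℝ) + 1 / 2) /
          (Real.Gamma ((t : ℝ) + 1 / 2) * Real.Gamma ((a : ℝ) + 1)) := by
  refine Nat.le_induction ?_ ?_
  · rw [Finset.Icc_eq_empty (by omega), Finset.prod_empty]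
    have h1 : 0 < Real.Gamma ((a : ℝ) + 1) := Real.Gamma_pos_of_pos (by positivity)
    have h2 : 0 < Real.Gamma ((a : ℝ) + 1 / 2) := Real.Gamma_pos_of_pos (by positivity)
    field_simp
  · intro N hN ih
    rw [Finset.prod_Icc_succ_top (by omega : a + 1 ≤ N + 1), ih]
    have e1 : Real.Gamma ((N : ℝ) + 1 + 1) = ((N : ℝ) + 1) * Real.Gamma ((N : ℝ) + 1) :=
      Real.Gamma_add_one (by positivity)
    have e2 : Real.Gamma ((N : ℝ) + 1 + 1 / 2)
        = ((N : ℝ) + 1 / 2) * Real.Gamma ((N : ℝ) + 1 / 2) := by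
      rw [show (N : ℝ) + 1 + 1 / 2 = (N : ℝ) + 1 / 2 + 1 by ring]
      exact Real.Gamma_add_one (by positivity)
    have h1 : 0 < Real.Gamma ((a : ℝ) + 1) := Real.Gamma_pos_of_pos (by positivity)
    have h2 : 0 < Real.Gamma ((a : ℝ) + 1 / 2) := Real.Gamma_pos_of_pos (by positivity)
    have h3 : 0 < Real.Gamma ((N : ℝ) + 1) := Real.Gamma_pos_of_pos (by positivity)
    have h4 : 0 < Real.Gamma ((N : ℝ) + 1 / 2) := Real.Gamma_pos_of_pos (by positivity)
    push_cast
    rw [e1, e2]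
    have h5 : 2 * ((N : ℝ) + 1) - 1 ≠ 0 := by
      have : (0 : ℝ) ≤ N := Nat.cast_nonneg N
      intro h; nlinarith
    field_simp
    ring_nf
    field_simp
    ring

/-- in the preferential attachment process `G_1^t`, for `1 ≤ a ≤ t`, the
expected value of the sum of the degrees in `G_1^t` of the first `a` vertices equals
`2a·∏_{i=a+1}^{t} (2i)/(2i−1) = 2a·Γ(t+1)Γ(a+1/2)/(Γ(t+1/2)Γ(a+1))`. -/
theorem statement14 (a t : ℕ) (ha : 1 ≤ a) (hat : a ≤ t) :
    (∑ σ : PASpace t, paWeight σ * (∑ j ∈ Finset.range a, (paDeg σ j t : ℝ)))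
        = 2 * (a : ℝ) * ∏ i ∈ Finset.Icc (a + 1) t, (2 * (i : ℝ)) / (2 * (i : ℝ) - 1) ∧
    (∑ σ : PASpace t, paWeight σ * (∑ j ∈ Finset.range a, (paDeg σ j t : ℝ)))
        = 2 * (a : ℝ) * (Real.Gamma ((t : ℝ) + 1) * Real.Gamma ((a : ℝ) + 1 / 2)) /
            (Real.Gamma ((t : ℝ) + 1 / 2) * Real.Gamma ((a : ℝ) + 1)) := by
  refine ⟨key a t hat, ?_⟩
  rw [key a t hat, gamma_prod a t hat]
  ring

end
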